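/- For all z, w in the open unit ball of ℂⁿ with z ≠ 0, one has |z - Φ_z(w)|² ≤ 2(1 - |z|²)/|1 - ⟨z,w⟩|. -/

import Mathlib

open MeasureTheory
open scoped ENNReal

noncomputable section

/-- `ℂⁿ` with the Euclidean (Hermitian) norm. -/
abbrev Cn (n : ℕ) := EuclideanSpace ℂ (Fin n)

/-- Lebesgue volume measure on `ℂⁿ`. -/
instance (n : ℕ) : MeasureSpace (Cn n) :=
  ⟨Measure.map (WithLp.toLp 2) (volume : Measure (Fin n → ℂ))⟩

/-- The open unit ball `𝔹` of `ℂⁿ`. -/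
def ball1 (n : ℕ) : Set (Cn n) := Metric.ball 0 1

/-- `⟨z,w⟩`: the Hermitian inner product in the paper's convention
(linear in `z`, conjugate-linear in `w`); in Mathlib's convention this is `inner w z`. -/
def ip {n : ℕ} (z w : Cn n) : ℂ := inner ℂ w z

/-- The numerator `a - P_a z - s_a Q_a z` of the Möbius automorphism `Φ_a`, where
`P_a z = (⟨z,a⟩/|a|²)a`, `Q_a = I - P_a` and `s_a = √(1-|a|²)`. -/
def numer {n : ℕ} (a z : Cn n) : Cn n :=
  a - ((ip z a) / ((‖a‖ ^ 2 : ℝ) : ℂ)) • a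
    - ((Real.sqrt (1 - ‖a‖ ^ 2) : ℝ) : ℂ) • (z - ((ip z a) / ((‖a‖ ^ 2 : ℝ) : ℂ)) • a)

/-- The involutive Möbius automorphism `Φ_a(z) = (a - P_a z - s_a Q_a z)/(1 - ⟨z,a⟩)`. -/
def phi {n : ℕ} (a z : Cn n) : Cn n := (1 - ip z a)⁻¹ • numer a z

theorem aux_ineq (a w d : ℝ) (ha : 0 ≤ a) (hw : 0 ≤ w) (hw1 : w < 1)
    (hd : 1 - a ≤ d) : w ^ 2 - a ^ 2 ≤ 2 * d := by
  nlinarith [sq_nonneg (1 - a)]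

theorem stmt1 (n : ℕ) (z w : Cn n) (hz : z ∈ ball1 n) (hw : w ∈ ball1 n) (hz0 : z ≠ 0) :
    ‖z - phi z w‖ ^ 2 ≤ 2 * (1 - ‖z‖ ^ 2) / ‖1 - ip z w‖ := by
  have hzn : ‖z‖ < 1 := by simpa [ball1] using hz
  have hwn : ‖w‖ < 1 := by simpa [ball1] using hw
  have hz0' : (0:ℝ) < ‖z‖ := norm_pos_iff.mpr hz0
  set α : ℂ := ip w z with hα
  have hαdef : α = inner ℂ z w := rfl
  have hαle : ‖α‖ < 1 := by
    calc ‖α‖ ≤ ‖z‖ * ‖w‖ := norm_inner_le_norm (𝕜 := ℂ) z w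
    _ < 1 := by nlinarith
  set d : ℂ := 1 - α with hd
  have hdnorm : ‖1 - ip z w‖ = ‖d‖ := by
    have h : (1 : ℂ) - ip z w = (starRingEnd ℂ) d := by
      simp only [hd, hαdef, ip, map_sub, map_one, inner_conj_symm]
    rw [h, RCLike.norm_conj]
  have hdge : 1 - ‖α‖ ≤ ‖d‖ := by
    calc 1 - ‖α‖ = ‖(1:ℂ)‖ - ‖α‖ := by simp
    _ ≤ ‖d‖ := norm_sub_norm_le _ _
  have hdpos : 0 < ‖d‖ := by linarith
  have hd0 : d ≠ 0 := by intro h; rw [h] at hdpos; simp at hdpos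
  set c : ℂ := α / ((‖z‖ ^ 2 : ℝ) : ℂ) with hc
  set s : ℝ := Real.sqrt (1 - ‖z‖ ^ 2) with hs
  have hs2 : s ^ 2 = 1 - ‖z‖ ^ 2 := Real.sq_sqrt (by nlinarith)
  have hinnzz : (inner ℂ z z : ℂ) = ((‖z‖ ^ 2 : ℝ) : ℂ) := by
    push_cast; exact inner_self_eq_norm_sq_to_K z
  have hr0 : ((‖z‖ ^ 2 : ℝ) : ℂ) ≠ 0 := by
    simp only [ne_eq, Complex.ofReal_eq_zero]; positivity
  have hz0c : ((‖z‖ : ℝ) : ℂ) ≠ 0 := by exact_mod_cast ne_of_gt hz0'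
  have hz0r : (‖z‖ : ℝ) ≠ 0 := ne_of_gt hz0'
  have horth : (inner ℂ z (w - c • z) : ℂ) = 0 := by
    rw [inner_sub_right, inner_smul_right, hinnzz, ← hαdef, hc,
      div_mul_cancel₀ _ hr0, sub_self]
  -- key decomposition
  have hkey : z - phi z w = d⁻¹ • ((c - α) • z + (s:ℂ) • (w - c • z)) := by
    have h : z - phi z w = d⁻¹ • (d • z - numer z w) := by
      rw [phi, smul_sub, smul_smul, inv_mul_cancel₀ hd0, one_smul]
    rw [h]
    congr 1
    rw [numer]
    simp only [← hα, ← hc, ← hs, hd]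
    module
  have hpyth : ‖(c - α) • z + (s:ℂ) • (w - c • z)‖ ^ 2
      = ‖(c-α)•z‖^2 + ‖(s:ℂ)•(w - c•z)‖^2 := by
    have h0 : (inner ℂ ((c - α) • z) ((s:ℂ) • (w - c • z)) : ℂ) = 0 := by
      rw [inner_smul_left, inner_smul_right, horth]; ring
    simp only [pow_two]
    exact norm_add_sq_eq_norm_sq_add_norm_sq_of_inner_eq_zero _ _ h0
  have hwcz : ‖w - c • z‖ ^ 2 = ‖w‖ ^ 2 - ‖α‖ ^ 2 / ‖z‖ ^ 2 := by
    have h2 : (inner ℂ (c • z) (w - c • z) : ℂ) = 0 := by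
      rw [inner_smul_left, horth]; ring
    have h3 : ‖c • z + (w - c • z)‖ ^ 2 = ‖c • z‖^2 + ‖w - c•z‖^2 := by
      simp only [pow_two]
      exact norm_add_sq_eq_norm_sq_add_norm_sq_of_inner_eq_zero _ _ h2
    have h4 : c • z + (w - c • z) = w := by abel
    have h5 : ‖c • z‖ ^ 2 = ‖α‖^2 / ‖z‖^2 := by
      rw [norm_smul, hc, mul_pow, norm_div]
      have h6 : ‖((‖z‖ ^ 2 : ℝ) : ℂ)‖ = ‖z‖^2 := by
        rw [Complex.norm_real, Real.norm_of_nonneg (sq_nonneg ‖z‖)]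
      rw [h6]
      field_simp
    rw [h4, h5] at h3
    linarith
  have hca : ‖c - α‖ ^ 2 = ‖α‖^2 * (1 - ‖z‖^2)^2 / ‖z‖^4 := by
    have h : c - α = α * (((1 - ‖z‖^2)/‖z‖^2 : ℝ) : ℂ) := by
      rw [hc]; push_cast; field_simp
    rw [h, norm_mul, Complex.norm_real,
      Real.norm_of_nonneg (div_nonneg (by nlinarith) (sq_nonneg _))]
    field_simp
  have hczn : ‖(c-α)•z‖^2 = ‖α‖^2 * (1 - ‖z‖^2)^2 / ‖z‖^2 := by
    rw [norm_smul, mul_pow, hca]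
    field_simp
  have hsn : ‖(s:ℂ)•(w - c•z)‖^2 = (1 - ‖z‖^2) * (‖w‖^2 - ‖α‖^2/‖z‖^2) := by
    rw [norm_smul, mul_pow, Complex.norm_real,
      Real.norm_of_nonneg (Real.sqrt_nonneg _), hs2, hwcz]
  have hsum : ‖(c-α)•z‖^2 + ‖(s:ℂ)•(w - c•z)‖^2 = (1 - ‖z‖^2) * (‖w‖^2 - ‖α‖^2) := by
    rw [hczn, hsn]
    field_simp
    ring
  -- norm identity
  have hmain : ‖z - phi z w‖ ^ 2 = (1 - ‖z‖^2) * (‖w‖^2 - ‖α‖^2) / ‖d‖^2 := by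
    rw [hkey, norm_smul, mul_pow, hpyth, hsum, norm_inv, inv_pow]
    rw [div_eq_inv_mul]
  rw [hdnorm, hmain]
  rw [div_le_div_iff₀ (by positivity) hdpos]
  have h7 : ‖w‖^2 - ‖α‖^2 ≤ 2 * ‖d‖ :=
    aux_ineq _ _ _ (norm_nonneg α) (norm_nonneg w) hwn hdge
  have h8 : (0:ℝ) ≤ 1 - ‖z‖^2 := by nlinarith
  calc (1 - ‖z‖^2) * (‖w‖^2 - ‖α‖^2) * ‖d‖
      = ((1 - ‖z‖^2) * ‖d‖) * (‖w‖^2 - ‖α‖^2) := by ring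
    _ ≤ ((1 - ‖z‖^2) * ‖d‖) * (2 * ‖d‖) :=
        mul_le_mul_of_nonneg_left h7 (mul_nonneg h8 hdpos.le)
    _ = 2 * (1 - ‖z‖^2) * ‖d‖^2 := by ring
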